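/- Assume φ : U × U → [0, ∞) satisfies λ(1 − λ)φ(u₁, u₂) ≤ λR(u₁) + (1 − λ)R(u₂) − R(λu₁ + (1 − λ)u₂) for all u₁, u₂ ∈ C and all λ ∈ (0, 1), and let ū ∈ C satisfy J(ū) ≤ J(u) for all u ∈ C. Then for every v ∈ C: (1/2)‖K(ū − v)‖_G² + φ(ū, v) ≤ J(v) − J(ū). -/

import Mathlib

lemma combo_norm_sq {G : Type*} [NormedAddCommGroup G] [InnerProductSpace ℝ G]
    (a b : G) (l : ℝ) :
    ‖l • a + (1 - l) • b‖ ^ 2 =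
      l * ‖a‖ ^ 2 + (1 - l) * ‖b‖ ^ 2 - l * (1 - l) * ‖a - b‖ ^ 2 := by
  have h : ∀ x : G, ‖x‖ ^ 2 = inner ℝ x x := fun x => (real_inner_self_eq_norm_sq x).symm
  simp only [h, inner_add_add_self, inner_sub_sub_self, real_inner_smul_left,
    real_inner_smul_right]
  ring

/-- Functional error estimate (lower bound part) for a Tikhonov functional with a
strongly convex-type penalty modulus φ, on a convex constraint set C. -/
theorem stmt_1
    {U G : Type*} [AddCommGroup U] [Module ℝ U]
    [NormedAddCommGroup G] [InnerProductSpace ℝ G]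
    (K : U →ₗ[ℝ] G) (gδ : G) (C : Set U) (hC : Convex ℝ C)
    (R : U → ℝ)
    (J : U → ℝ) (hJ : ∀ u, J u = (1/2) * ‖K u - gδ‖^2 + R u)
    (φ : U → U → ℝ) (hφ0 : ∀ u₁ u₂, 0 ≤ φ u₁ u₂)
    (hφ : ∀ u₁ ∈ C, ∀ u₂ ∈ C, ∀ lam ∈ Set.Ioo (0:ℝ) 1,
      lam * (1 - lam) * φ u₁ u₂ ≤
        lam * R u₁ + (1 - lam) * R u₂ - R (lam • u₁ + (1 - lam) • u₂))
    (ubar : U) (hubar : ubar ∈ C) (hmin : ∀ u ∈ C, J ubar ≤ J u) :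
    ∀ v ∈ C, (1/2) * ‖K (ubar - v)‖^2 + φ ubar v ≤ J v - J ubar := by
  intro v hv
  set A : ℝ := (1/2) * ‖K (ubar - v)‖^2 + φ ubar v with hA
  have hAnn : 0 ≤ A := add_nonneg (by positivity) (hφ0 ubar v)
  have key : ∀ lam ∈ Set.Ioo (0:ℝ) 1, lam * A ≤ J v - J ubar := by
    intro lam hlam
    obtain ⟨hl0, hl1⟩ := hlam
    have hmem : lam • ubar + (1 - lam) • v ∈ C :=
      hC hubar hv hl0.le (by linarith) (by ring)
    have h1 := hmin _ hmem
    have hφ' := hφ ubar hubar v hv lam ⟨hl0, hl1⟩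
    have hK : K (lam • ubar + (1 - lam) • v) - gδ =
        lam • (K ubar - gδ) + (1 - lam) • (K v - gδ) := by
      simp only [map_add, map_smul, smul_sub]
      module
    have hnorm : ‖K (lam • ubar + (1 - lam) • v) - gδ‖ ^ 2 =
        lam * ‖K ubar - gδ‖ ^ 2 + (1 - lam) * ‖K v - gδ‖ ^ 2
          - lam * (1 - lam) * ‖K (ubar - v)‖ ^ 2 := by
      rw [hK, combo_norm_sq]
      congr 3
      rw [map_sub]
      abel_nf
    rw [hJ, hJ, hnorm] at h1
    rw [hJ v, hJ ubar, hA]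
    nlinarith [h1, hφ']
  have htend : Filter.Tendsto (fun lam : ℝ => lam * A) (nhdsWithin 1 (Set.Ioo (0:ℝ) 1)) (nhds A) := by
    have : Filter.Tendsto (fun lam : ℝ => lam * A) (nhds 1) (nhds (1 * A)) :=
      (continuous_id.mul continuous_const).tendsto 1
    rw [one_mul] at this
    exact this.mono_left nhdsWithin_le_nhds
  have hne : (nhdsWithin (1:ℝ) (Set.Ioo (0:ℝ) 1)).NeBot := by
    apply mem_closure_iff_nhdsWithin_neBot.mp
    rw [closure_Ioo (by norm_num : (0:ℝ) ≠ 1)]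
    exact ⟨by norm_num, le_refl 1⟩
  exact le_of_tendsto htend (Filter.eventually_of_mem self_mem_nhdsWithin key)
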